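/- Let Γ be a cyclic group of odd order, R = ℤ'[Γ], I ⊆ Γ a subgroup with generator τ, φ̃ ∈ Γ, N_I the norm element of I, and g̃ = 1 − φ̃^{−1} + #I. Let ρ : R² → (τ−1, g̃) be the surjection sending the standard basis to τ−1 and g̃. Then the first projection R² → R restricts to an isomorphism of R-modules from Ker(ρ) onto the ideal (N_I, g̃). -/

import Mathlib

open MonoidAlgebra Subgroup

section Stmt4Aux
variable {k : Type} [CommRing k] {Γ : Type} [CommGroup Γ] [Fintype Γ]


lemma norm_mul_apply (τ : Γ) (b : MonoidAlgebra k Γ) (x : Γ) :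
    ((∑ σ : zpowers τ, single (σ : Γ) (1:k)) * b).coeff x = ∑ σ : zpowers τ, b.coeff ((σ : Γ)⁻¹ * x) := by
  classical
  rw [Finset.sum_mul, coeff_sum, Finsupp.finset_sum_apply]
  simp [coeff_single_mul_apply]

lemma lemA (τ : Γ) (a : MonoidAlgebra k Γ) (h : a * single τ (1:k) = a) :
    ∃ c, a = (∑ σ : zpowers τ, single (σ : Γ) (1:k)) * c := by
  classical
  have hshift : ∀ x : Γ, a.coeff (x * τ⁻¹) = a.coeff x := by
    intro x
    conv_rhs => rw [← h]
    rw [coeff_mul_single_apply, mul_one]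
  have hpow : ∀ (n : ℕ) (x : Γ), a.coeff (x * τ ^ n) = a.coeff x := by
    intro n
    induction n with
    | zero => simp
    | succ n ih =>
      intro x
      have h2 := hshift (x * τ ^ (n+1))
      rw [show x * τ ^ (n+1) * τ⁻¹ = x * τ ^ n by
        rw [pow_succ, ← mul_assoc, mul_assoc _ _ τ⁻¹, mul_inv_cancel, mul_one]] at h2
      rw [← h2, ih]
  have hconst : ∀ σ : Γ, σ ∈ zpowers τ → ∀ x : Γ, a.coeff (x * σ) = a.coeff x := by
    intro σ hσ x
    obtain ⟨n, rfl⟩ := (isOfFinOrder_of_finite τ).mem_powers_iff_mem_zpowers.mpr hσ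
    exact hpow n x
  set r : Γ → Γ := fun y => (QuotientGroup.mk (s := zpowers τ) y).out with hrdef
  have hmk : ∀ y, QuotientGroup.mk (s := zpowers τ) (r y) = QuotientGroup.mk y :=
    fun y => QuotientGroup.out_eq' _
  have hr : ∀ y, y * (r y)⁻¹ ∈ zpowers τ := by
    intro y
    have h3 := (QuotientGroup.eq (s := zpowers τ)).mp (hmk y)
    have h4 : (r y)⁻¹ * y ∈ zpowers τ := h3
    rwa [mul_comm] at h4
  have hrc : ∀ y, a.coeff (r y) = a.coeff y := by
    intro y
    have h5 := hconst _ (hr y) (r y)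
    rw [mul_comm y (r y)⁻¹, mul_inv_cancel_left] at h5
    exact h5.symm
  have hrI : ∀ (σ : Γ), σ ∈ zpowers τ → ∀ y, r (σ * y) = r y := by
    intro σ hσ y
    simp only [hrdef]
    congr 1
    rw [QuotientGroup.eq]
    have h6 : (σ * y)⁻¹ * y = σ⁻¹ := by
      rw [mul_inv_rev, mul_assoc, mul_comm, mul_assoc, mul_inv_cancel, mul_one]
    rw [h6]
    exact inv_mem hσ
  refine ⟨ofCoeff (Finsupp.equivFunOnFinite.symm (fun y => if y = r y then a.coeff y else 0)), ?_⟩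
  ext x
  rw [norm_mul_apply]
  have key : ∀ σ : zpowers τ,
      (ofCoeff (Finsupp.equivFunOnFinite.symm (fun y => if y = r y then a.coeff y else 0)) : MonoidAlgebra k Γ).coeff
        ((σ : Γ)⁻¹ * x) = if σ = (⟨x * (r x)⁻¹, hr x⟩ : zpowers τ) then a.coeff x else 0 := by
    intro σ
    have h4 : ((ofCoeff (Finsupp.equivFunOnFinite.symm (fun y => if y = r y then a.coeff y else 0)) : MonoidAlgebra k Γ).coeff
        ((σ : Γ)⁻¹ * x)) = if (σ : Γ)⁻¹ * x = r ((σ : Γ)⁻¹ * x) then a.coeff ((σ : Γ)⁻¹ * x) else 0 := rfl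
    rw [h4, hrI _ (inv_mem σ.2) x]
    have h5 : a.coeff ((σ : Γ)⁻¹ * x) = a.coeff x := by
      have h7 := hconst _ (inv_mem σ.2) x
      rwa [mul_comm] at h7
    rw [h5]
    congr 1
    simp only [eq_iff_iff, Subtype.ext_iff]
    constructor
    · intro h6
      rw [← h6, mul_inv_rev, inv_inv, mul_inv_cancel_left]
    · intro h6
      rw [h6, mul_inv_rev, inv_inv, mul_assoc, inv_mul_cancel, mul_one]
  rw [Finset.sum_congr rfl (fun σ _ => key σ), Finset.sum_ite_eq' Finset.univ]
  rw [if_pos (Finset.mem_univ _)]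

lemma norm_mul_tau (τ : Γ) :
    (∑ σ : zpowers τ, single (σ : Γ) (1:k)) * single τ 1 = ∑ σ : zpowers τ, single (σ : Γ) (1:k) := by
  classical
  rw [Finset.sum_mul]
  simp only [single_mul_single, one_mul]
  exact Fintype.sum_equiv (Equiv.mulRight (⟨τ, mem_zpowers τ⟩ : zpowers τ))
    (fun σ => single ((σ : Γ) * τ) 1) (fun σ => single (σ : Γ) 1) (fun σ => rfl)

lemma lemB (τ : Γ) (b : MonoidAlgebra k Γ)
    (h : (∑ σ : zpowers τ, single (σ : Γ) (1:k)) * b = 0) :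
    ∃ c, b = (single τ (1:k) - 1) * c := by
  classical
  have hord := isOfFinOrder_of_finite τ
  have hm : 0 < orderOf τ := hord.orderOf_pos
  set m := orderOf τ with hmdef
  let e : Fin m ≃ zpowers τ :=
    (finEquivZPowers hord).trans (Equiv.subtypeEquivRight fun _ => Iff.rfl)
  have he : ∀ i : Fin m, (e i : Γ) = τ ^ (i : ℕ) := fun i => rfl
  have hfin : ∀ x : Γ, ∑ i ∈ Finset.range m, b.coeff (τ ^ i * x) = 0 := by
    intro x
    have h1 : ∑ σ : zpowers τ, b.coeff ((σ : Γ)⁻¹ * x) = 0 := by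
      rw [← norm_mul_apply, h]; rfl
    have h2 : ∑ σ : zpowers τ, b.coeff ((σ : Γ) * x) = 0 := by
      rw [← h1]
      exact Fintype.sum_equiv (Equiv.inv _) _ _ (fun σ => by simp)
    rw [← Fin.sum_univ_eq_sum_range fun i => b.coeff (τ ^ i * x), ← h2]
    exact Fintype.sum_equiv e (fun i => b.coeff (τ ^ (i : ℕ) * x)) (fun σ => b.coeff ((σ : Γ) * x))
      (fun i => by show b.coeff (τ ^ (i:ℕ) * x) = b.coeff ((e i : Γ) * x); rw [he])
  set r : Γ → Γ := fun y => (QuotientGroup.mk (s := zpowers τ) y).out with hrdef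
  have hr : ∀ y, y * (r y)⁻¹ ∈ zpowers τ := by
    intro y
    have h3 := (QuotientGroup.eq (s := zpowers τ)).mp (QuotientGroup.out_eq' (s := zpowers τ) y)
    have h4 : (r y)⁻¹ * y ∈ zpowers τ := h3
    rwa [mul_comm] at h4
  have hrI : ∀ (σ : Γ), σ ∈ zpowers τ → ∀ y, r (σ * y) = r y := by
    intro σ hσ y
    simp only [hrdef]
    congr 1
    rw [QuotientGroup.eq]
    have h6 : (σ * y)⁻¹ * y = σ⁻¹ := by
      rw [mul_inv_rev, mul_assoc, mul_comm, mul_assoc, mul_inv_cancel, mul_one]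
    rw [h6]
    exact inv_mem hσ
  set j : Γ → ℕ := fun y => ((e.symm ⟨y * (r y)⁻¹, hr y⟩ : Fin m) : ℕ) with hjdef
  have hj : ∀ y, τ ^ (j y) * r y = y := by
    intro y
    have h7 : (e (e.symm ⟨y * (r y)⁻¹, hr y⟩) : Γ) = y * (r y)⁻¹ := by
      rw [e.apply_symm_apply]
    rw [he] at h7
    rw [hjdef]
    rw [h7, inv_mul_cancel_right]
  have hjlt : ∀ y, j y < m := fun y => (e.symm ⟨y * (r y)⁻¹, hr y⟩).2
  have hjuniq : ∀ (y : Γ) (i : ℕ), i < m → τ ^ i * r y = y → i = j y := by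
    intro y i hi hiy
    have h8 : τ ^ i = τ ^ j y := by
      have h9 := hj y
      nth_rewrite 2 [← h9] at hiy
      exact mul_right_cancel hiy
    exact pow_injOn_Iio_orderOf (x := τ) hi (hjlt y) h8
  -- define c
  set c : MonoidAlgebra k Γ :=
    ofCoeff (Finsupp.equivFunOnFinite.symm (fun y => -(∑ i ∈ Finset.range (j y), b.coeff (τ ^ (i+1) * r y))))
    with hcdef
  have hcapp : ∀ y : Γ, c.coeff y = -(∑ i ∈ Finset.range (j y), b.coeff (τ ^ (i+1) * r y)) := fun y => rfl
  refine ⟨c, ?_⟩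
  ext x
  rw [sub_mul, one_mul, coeff_sub, Finsupp.sub_apply, coeff_single_mul_apply, one_mul]
  -- goal : b x = c (τ⁻¹ * x) - c x
  have hrτ : r (τ⁻¹ * x) = r x := hrI τ⁻¹ (inv_mem (mem_zpowers τ)) x
  rcases Nat.eq_zero_or_eq_succ_pred (j x) with hJ | hJ
  · -- j x = 0, so x = r x
    have hx : x = r x := by
      conv_lhs => rw [← hj x, hJ, pow_zero, one_mul]
    have hpm : τ ^ (m - 1) = τ⁻¹ := by
      apply eq_inv_of_mul_eq_one_left
      rw [← pow_succ, Nat.sub_add_cancel hm, hmdef, pow_orderOf_eq_one]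
    have hjinv : j (τ⁻¹ * x) = m - 1 := by
      symm
      apply hjuniq
      · omega
      · rw [hrτ, ← hx, hpm]
    rw [hcapp, hcapp, hJ, hrτ, hjinv]
    rw [Finset.sum_range_zero, neg_zero, sub_zero]
    have hsum := hfin x
    rw [show m = (m - 1) + 1 by omega, Finset.sum_range_succ', pow_zero, one_mul] at hsum
    rw [← hx]
    linear_combination hsum
  · -- j x = J + 1
    set J := (j x).pred with hJdef
    have hx : τ ^ (J + 1) * r x = x := by
      have h10 := hj x
      rw [hJ] at h10
      exact h10
    have hjinv : j (τ⁻¹ * x) = J := by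
      symm
      apply hjuniq
      · have := hjlt x; omega
      · rw [hrτ]
        conv_rhs => rw [← hx, pow_succ', mul_assoc, inv_mul_cancel_left]
    rw [hcapp, hcapp, hrτ, hjinv, hJ]
    rw [show J.succ = J + 1 from rfl, Finset.sum_range_succ, hx]
    ring

end Stmt4Aux

lemma powersTwoLe : Submonoid.powers (2 : ℤ) ≤ nonZeroDivisors ℤ := by
  rintro x ⟨n, rfl⟩
  exact pow_mem (mem_nonZeroDivisors_of_ne_zero (by norm_num)) n

lemma locAwayDomain : IsDomain (Localization.Away (2 : ℤ)) :=
  IsLocalization.isDomain_localization (M := Submonoid.powers (2 : ℤ)) powersTwoLe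

lemma locAwayCharZero : CharZero (Localization.Away (2 : ℤ)) := by
  have hinj : Function.Injective (algebraMap ℤ (Localization.Away (2 : ℤ))) :=
    IsLocalization.injective _ powersTwoLe
  constructor
  intro a b hab
  have h2 : (algebraMap ℤ (Localization.Away (2 : ℤ))) a = (algebraMap ℤ (Localization.Away (2 : ℤ))) b := by
    rw [map_natCast, map_natCast]
    exact hab
  exact_mod_cast hinj h2

lemma lemReg {k : Type} [CommRing k] [IsDomain k] [CharZero k]
    {Γ : Type} [CommGroup Γ] [Fintype Γ] (φ : Γ) (m : ℕ) (hm : 0 < m)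
    (x : MonoidAlgebra k Γ)
    (h : (1 - single φ (1:k) + (m : MonoidAlgebra k Γ)) * x = 0) : x = 0 := by
  classical
  set u : MonoidAlgebra k Γ := single φ 1 with hudef
  have h1 : u * x = ((1 + m : ℕ) : k) • x := by
    have h2 : ((1 + m : ℕ) : MonoidAlgebra k Γ) * x = u * x := by
      push_cast
      linear_combination h
    rw [← h2, ← nsmul_eq_mul, Nat.cast_smul_eq_nsmul]
  have hpow : ∀ n : ℕ, u ^ n * x = (((1 + m : ℕ) ^ n : ℕ) : k) • x := by
    intro n
    induction n with
    | zero => simp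
    | succ n ih =>
      rw [pow_succ, mul_comm (u ^ n) u, mul_assoc, ih, mul_smul_comm, h1, smul_smul,
        pow_succ, Nat.cast_mul]
  have hord : u ^ orderOf φ = 1 := by
    rw [hudef, single_pow, one_pow, pow_orderOf_eq_one, ← one_def]
  have hkey := hpow (orderOf φ)
  rw [hord, one_mul] at hkey
  have hsub : ((((1 + m : ℕ) ^ orderOf φ - 1 : ℕ)) : k) • x = 0 := by
    have hle : (1:ℕ) ≤ (1 + m : ℕ) ^ orderOf φ := Nat.one_le_pow _ _ (by omega)
    rw [Nat.cast_sub hle, sub_smul, Nat.cast_one, one_smul, ← hkey, sub_self]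
  have hne : ((((1 + m : ℕ) ^ orderOf φ - 1 : ℕ)) : k) ≠ 0 := by
    rw [Nat.cast_ne_zero]
    have hop : 0 < orderOf φ := (isOfFinOrder_of_finite φ).orderOf_pos
    have : 2 ^ orderOf φ ≤ (1 + m) ^ orderOf φ := Nat.pow_le_pow_left (by omega) _
    have : 2 ≤ 2 ^ orderOf φ := by
      calc 2 = 2 ^ 1 := rfl
      _ ≤ 2 ^ orderOf φ := Nat.pow_le_pow_right (by norm_num) hop
    omega
  ext y
  have : (((((1 + m : ℕ) ^ orderOf φ - 1 : ℕ)) : k) • x).coeff y = (0 : MonoidAlgebra k Γ).coeff y := by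
    rw [hsub]
  rw [coeff_smul, Finsupp.smul_apply, smul_eq_mul] at this
  rcases mul_eq_zero.mp this with h' | h'
  · exact absurd h' hne
  · simpa using h'


/-- R = ℤ[1/2][Γ] with Γ cyclic of odd order, I = ⟨τ⟩, φ̃ ∈ Γ,
g̃ = 1 - φ̃⁻¹ + #I.  The first projection R² → R restricts to an isomorphism from
Ker(ρ) (where ρ : R² → (τ-1, g̃), (a,b) ↦ a(τ-1) + b g̃) onto the ideal (N_I, g̃). -/
theorem stmt4 (Γ : Type) [CommGroup Γ] [Fintype Γ] [IsCyclic Γ]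
    (hodd : Odd (Fintype.card Γ)) (τ φt : Γ)
    (NI : MonoidAlgebra (Localization.Away (2 : ℤ)) Γ)
    (hNI : NI = ∑ σ : Subgroup.zpowers τ, MonoidAlgebra.single (σ : Γ) 1)
    (g : MonoidAlgebra (Localization.Away (2 : ℤ)) Γ)
    (hgdef : g = 1 - MonoidAlgebra.single φt⁻¹ 1
      + (Nat.card (Subgroup.zpowers τ) : MonoidAlgebra (Localization.Away (2 : ℤ)) Γ)) :
    Submodule.map
        (LinearMap.fst (MonoidAlgebra (Localization.Away (2 : ℤ)) Γ)
          (MonoidAlgebra (Localization.Away (2 : ℤ)) Γ)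
          (MonoidAlgebra (Localization.Away (2 : ℤ)) Γ))
        (LinearMap.ker
          ((LinearMap.toSpanSingleton (MonoidAlgebra (Localization.Away (2 : ℤ)) Γ)
              (MonoidAlgebra (Localization.Away (2 : ℤ)) Γ)
              (MonoidAlgebra.single τ 1 - 1)).coprod
            (LinearMap.toSpanSingleton (MonoidAlgebra (Localization.Away (2 : ℤ)) Γ)
              (MonoidAlgebra (Localization.Away (2 : ℤ)) Γ) g))) =
      Ideal.span {NI, g} ∧
    Set.InjOn Prod.fst
      (LinearMap.ker
        ((LinearMap.toSpanSingleton (MonoidAlgebra (Localization.Away (2 : ℤ)) Γ)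
            (MonoidAlgebra (Localization.Away (2 : ℤ)) Γ)
            (MonoidAlgebra.single τ 1 - 1)).coprod
          (LinearMap.toSpanSingleton (MonoidAlgebra (Localization.Away (2 : ℤ)) Γ)
            (MonoidAlgebra (Localization.Away (2 : ℤ)) Γ) g)) :
        Set (MonoidAlgebra (Localization.Away (2 : ℤ)) Γ × MonoidAlgebra (Localization.Away (2 : ℤ)) Γ)) := by
  classical
  haveI : IsDomain (Localization.Away (2 : ℤ)) := locAwayDomain
  haveI : CharZero (Localization.Away (2 : ℤ)) := locAwayCharZero
  have hm : 0 < Nat.card (Subgroup.zpowers τ) := Nat.card_pos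
  have hreg : ∀ x : MonoidAlgebra (Localization.Away (2 : ℤ)) Γ, g * x = 0 → x = 0 := by
    intro x hx
    exact lemReg φt⁻¹ _ hm x (by rw [← hgdef]; exact hx)
  have hNt : NI * (MonoidAlgebra.single τ 1 - 1) = 0 := by
    rw [hNI]; linear_combination norm_mul_tau (k := Localization.Away (2 : ℤ)) τ
  constructor
  · apply le_antisymm
    · rintro x hx
      simp only [Submodule.mem_map, LinearMap.mem_ker, LinearMap.coprod_apply,
        LinearMap.toSpanSingleton_apply, smul_eq_mul, LinearMap.fst_apply] at hx
      obtain ⟨⟨a, b⟩, hab, rfl⟩ := hx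
      have h1 : g * (b * NI) = 0 := by linear_combination NI * hab - a * hNt
      have h2 : b * NI = 0 := hreg _ h1
      have h3 : (∑ σ : Subgroup.zpowers τ, MonoidAlgebra.single (σ : Γ)
          (1 : Localization.Away (2 : ℤ))) * b = 0 := by
        rw [← hNI]; linear_combination h2
      obtain ⟨c, hc⟩ := lemB τ b h3
      have h4 : (a + c * g) * MonoidAlgebra.single τ 1 = a + c * g := by
        linear_combination hab - g * hc
      obtain ⟨d, hd⟩ := lemA τ (a + c * g) h4
      rw [← hNI] at hd
      rw [Ideal.mem_span_pair]
      exact ⟨d, -c, by linear_combination -hd⟩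
    · rw [Ideal.span_le]
      rintro x hx
      simp only [Set.mem_insert_iff, Set.mem_singleton_iff] at hx
      rcases hx with rfl | rfl
      · refine SetLike.mem_coe.mpr (Submodule.mem_map.mpr ⟨⟨x, 0⟩, ?_, rfl⟩)
        simp only [LinearMap.mem_ker, LinearMap.coprod_apply,
          LinearMap.toSpanSingleton_apply, smul_eq_mul]
        linear_combination hNt
      · refine SetLike.mem_coe.mpr (Submodule.mem_map.mpr
          ⟨⟨x, -(MonoidAlgebra.single τ 1 - 1)⟩, ?_, rfl⟩)
        simp only [LinearMap.mem_ker, LinearMap.coprod_apply,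
          LinearMap.toSpanSingleton_apply, smul_eq_mul]
        ring
  · intro p hp q hq hpq
    simp only [SetLike.mem_coe, LinearMap.mem_ker, LinearMap.coprod_apply,
      LinearMap.toSpanSingleton_apply, smul_eq_mul] at hp hq
    have hpq' : p.1 = q.1 := hpq
    have h5 : g * (p.2 - q.2) = 0 := by
      linear_combination hp - hq - (MonoidAlgebra.single τ 1 - 1) * hpq'
    have h6 := hreg _ h5
    exact Prod.ext hpq' (sub_eq_zero.mp h6)
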